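/- arXiv:2511.07271 — 2 statements merged into one kernel-verified Lean document; each statement's English description precedes it below -/
import Mathlib

section
/- For every natural number d ≥ 1 and real exponents α₀, α₁, …, α_d > −1, the integral over the standard d-simplex Δ_d = {x ∈ ℝ^d : xᵢ ≥ 0 for all i, and x₁ + ⋯ + x_d ≤ 1} satisfies ∫_{Δ_d} (∏_{i=1}^{d} xᵢ^{αᵢ}) · (1 − x₁ − ⋯ − x_d)^{α₀} dx = (∏_{i=0}^{d} Γ(αᵢ + 1)) / Γ(d + 1 + α₀ + α₁ + ⋯ + α_d), where Γ denotes the real Gamma function and the integral is with respect to d-dimensional Lebesgue measure. -/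
open MeasureTheory Set ENNReal intervalIntegral

lemma real_beta {a b : ℝ} (ha : 0 < a) (hb : 0 < b) :
    ∫ t in (0:ℝ)..1, t ^ (a-1) * (1-t) ^ (b-1)
      = Real.Gamma a * Real.Gamma b / Real.Gamma (a+b) := by
  have h := Complex.Gamma_mul_Gamma_eq_betaIntegral (s := a) (t := b)
    (by simpa using ha) (by simpa using hb)
  have hB : Complex.betaIntegral a b
      = ((∫ t in (0:ℝ)..1, t ^ (a-1) * (1-t) ^ (b-1) : ℝ) : ℂ) := by
    rw [Complex.betaIntegral, ← intervalIntegral.integral_ofReal]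
    apply intervalIntegral.integral_congr
    intro x hx
    rw [Set.uIcc_of_le (by norm_num : (0:ℝ) ≤ 1)] at hx
    simp only []
    rw [Complex.ofReal_mul, Complex.ofReal_cpow hx.1,
      Complex.ofReal_cpow (by linarith [hx.2] : (0:ℝ) ≤ 1 - x)]
    push_cast
    ring
  have hg : Real.Gamma (a+b) ≠ 0 := (Real.Gamma_pos_of_pos (by linarith)).ne'
  rw [hB] at h
  rw [show ((a:ℂ)+(b:ℂ)) = ((a+b : ℝ) : ℂ) by push_cast; ring] at h
  rw [Complex.Gamma_ofReal, Complex.Gamma_ofReal, Complex.Gamma_ofReal,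
    ← Complex.ofReal_mul, ← Complex.ofReal_mul] at h
  have := Complex.ofReal_injective h
  field_simp
  linarith [this]

lemma beta_int_left' {a : ℝ} (ha : -1 < a) (b : ℝ) {c : ℝ} (hc : 0 < c) :
    IntervalIntegrable (fun t : ℝ => t ^ a * (c-t) ^ b) volume 0 (c/2) := by
  apply IntervalIntegrable.mul_continuousOn (intervalIntegrable_rpow' ha)
  apply ContinuousOn.rpow_const (by fun_prop)
  intro x hx
  rw [Set.uIcc_of_le (by linarith : (0:ℝ) ≤ c/2)] at hx
  left
  have h2 := hx.2
  intro h
  have h3 : x = c := by linarith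
  rw [h3] at h2; linarith

lemma beta_scaled_integrable {a b : ℝ} (ha : -1 < a) (hb : -1 < b) {c : ℝ} (hc : 0 < c) :
    IntervalIntegrable (fun t : ℝ => t ^ a * (c-t) ^ b) volume 0 c := by
  refine (beta_int_left' ha b hc).trans ?_
  have h := (beta_int_left' hb a hc).comp_sub_left c
  simp only [sub_zero] at h
  have h2 : IntervalIntegrable (fun t : ℝ => t ^ a * (c-t) ^ b) volume c (c - c/2) := by
    apply h.congr
    intro x _
    show (c - x) ^ b * (c - (c - x)) ^ a = x ^ a * (c-x) ^ b
    rw [_root_.sub_sub_cancel]; ring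
  have h3 : c - c/2 = c/2 := by ring
  rw [h3] at h2
  exact h2.symm

lemma beta_scaled_value {a b : ℝ} (ha : -1 < a) (hb : -1 < b) {c : ℝ} (hc : 0 < c) :
    ∫ t in (0:ℝ)..c, t ^ a * (c-t) ^ b
      = c ^ (a+b+1) * (Real.Gamma (a+1) * Real.Gamma (b+1) / Real.Gamma (a+b+2)) := by
  have key : (∫ x in (0:ℝ)..1, (fun t : ℝ => t ^ a * (c-t) ^ b) (c * x))
      = c ^ a * c ^ b * ∫ x in (0:ℝ)..1, x ^ a * (1-x) ^ b := by
    rw [← intervalIntegral.integral_const_mul]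
    apply intervalIntegral.integral_congr
    intro x hx
    rw [Set.uIcc_of_le (by norm_num : (0:ℝ) ≤ 1)] at hx
    show (c * x) ^ a * (c - c * x) ^ b = c ^ a * c ^ b * (x ^ a * (1-x) ^ b)
    rw [show c - c * x = c * (1 - x) by ring,
      Real.mul_rpow hc.le hx.1, Real.mul_rpow hc.le (by linarith [hx.2])]
    ring
  have comp := intervalIntegral.smul_integral_comp_mul_left
    (f := fun t : ℝ => t ^ a * (c-t) ^ b) (a := (0:ℝ)) (b := 1) c
  rw [mul_zero, mul_one] at comp
  have rb := real_beta (show (0:ℝ) < a+1 by linarith) (show (0:ℝ) < b+1 by linarith)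
  rw [show a + 1 - 1 = a by ring, show b + 1 - 1 = b by ring,
    show a + 1 + (b + 1) = a + b + 2 by ring] at rb
  rw [← comp, key, rb]
  rw [smul_eq_mul]
  rw [show c ^ (a+b+1) = c ^ a * c ^ b * c ^ (1:ℝ) by
    rw [← Real.rpow_add hc, ← Real.rpow_add hc]]
  rw [Real.rpow_one]
  ring

lemma slice_lintegral {a b : ℝ} (ha : -1 < a) (hb : -1 < b) {c : ℝ} (hc : 0 < c) :
    ∫⁻ t in Set.Ioc 0 c, ENNReal.ofReal (t ^ a * (c-t) ^ b)
      = ENNReal.ofReal (c ^ (a+b+1) *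
          (Real.Gamma (a+1) * Real.Gamma (b+1) / Real.Gamma (a+b+2))) := by
  rw [← beta_scaled_value ha hb hc, intervalIntegral.integral_of_le hc.le,
    ← ofReal_integral_eq_lintegral_ofReal (beta_scaled_integrable ha hb hc).1]
  rw [Filter.EventuallyLE, ae_restrict_iff' measurableSet_Ioc]
  filter_upwards with t ht
  exact mul_nonneg (Real.rpow_nonneg ht.1.le _) (Real.rpow_nonneg (by linarith [ht.2]) _)

lemma sum_hyperplane_null (d : ℕ) :
    volume {y : Fin d → ℝ | ∑ i, y i = 1} = 0 := by
  cases d with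
  | zero => simp
  | succ n =>
    set v : Fin (n+1) → ℝ := Pi.single 0 1 with hv
    have hvsum : ∑ i, v i = 1 := by simp [hv]
    have hpre : (· + v) ⁻¹' {y : Fin (n+1) → ℝ | ∑ i, y i = 1}
        = {y : Fin (n+1) → ℝ | ∑ i, y i = 0} := by
      ext y
      simp only [Set.mem_preimage, Set.mem_setOf_eq, Pi.add_apply, Finset.sum_add_distrib, hvsum]
      constructor <;> intro h <;> linarith
    have hmp : volume ((· + v) ⁻¹' {y : Fin (n+1) → ℝ | ∑ i, y i = 1})
        = volume {y : Fin (n+1) → ℝ | ∑ i, y i = 1} :=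
      measure_preimage_add_right volume v _
    rw [← hmp, hpre]
    set L : (Fin (n+1) → ℝ) →ₗ[ℝ] ℝ := ∑ i, LinearMap.proj i with hL
    have hLy : ∀ y : Fin (n+1) → ℝ, L y = ∑ i, y i := by
      intro y; simp [hL, LinearMap.proj]
    have hker : {y : Fin (n+1) → ℝ | ∑ i, y i = 0} = (LinearMap.ker L : Set (Fin (n+1) → ℝ)) := by
      ext y; simp [LinearMap.mem_ker, hLy]
    rw [hker]
    apply Measure.addHaar_submodule
    intro htop
    have : v ∈ LinearMap.ker L := htop ▸ Submodule.mem_top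
    rw [LinearMap.mem_ker, hLy, hvsum] at this
    norm_num at this

lemma simplex_meas (d : ℕ) :
    MeasurableSet {x : Fin d → ℝ | (∀ i, 0 ≤ x i) ∧ ∑ i, x i ≤ 1} := by
  have : {x : Fin d → ℝ | (∀ i, 0 ≤ x i) ∧ ∑ i, x i ≤ 1}
      = (⋂ i, {x : Fin d → ℝ | 0 ≤ x i}) ∩ {x : Fin d → ℝ | ∑ i, x i ≤ 1} := by
    ext x; simp [Set.mem_iInter]
  rw [this]
  exact (MeasurableSet.iInter fun i =>
    measurableSet_le measurable_const (measurable_pi_apply i)).inter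
    (measurableSet_le (by fun_prop) measurable_const)

lemma key_zero (α : Fin 1 → ℝ) (hα : ∀ i, -1 < α i) :
    ∫⁻ x in {x : Fin 0 → ℝ | (∀ i, 0 ≤ x i) ∧ ∑ i, x i ≤ 1},
      ENNReal.ofReal ((∏ i : Fin 0, x i ^ α i.succ) * (1 - ∑ i, x i) ^ α 0)
    = ENNReal.ofReal ((∏ i, Real.Gamma (α i + 1)) / Real.Gamma ((0:ℕ) + 1 + ∑ i, α i)) := by
  have hset : {x : Fin 0 → ℝ | (∀ i, 0 ≤ x i) ∧ ∑ i, x i ≤ 1} = Set.univ := by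
    ext x; simp
  rw [hset, Measure.restrict_univ]
  simp only [Finset.univ_eq_empty, Finset.prod_empty, Finset.sum_empty, sub_zero, Real.one_rpow,
    one_mul]
  rw [lintegral_const]
  have hvol : (volume : Measure (Fin 0 → ℝ)) Set.univ = 1 := by
    rw [MeasureTheory.volume_pi, Measure.pi_univ]; simp
  rw [hvol, mul_one]
  rw [Fin.prod_univ_one, Fin.sum_univ_one]
  rw [show (0:ℕ) + (1:ℝ) + α 0 = α 0 + 1 by push_cast; ring]
  rw [div_self (Real.Gamma_pos_of_pos (by linarith [hα 0])).ne']

lemma key_succ (d : ℕ)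
    (ih : ∀ (β : Fin (d+1) → ℝ), (∀ i, -1 < β i) →
      ∫⁻ y in {y : Fin d → ℝ | (∀ i, 0 ≤ y i) ∧ ∑ i, y i ≤ 1},
        ENNReal.ofReal ((∏ i : Fin d, y i ^ β i.succ) * (1 - ∑ i, y i) ^ β 0)
      = ENNReal.ofReal ((∏ i, Real.Gamma (β i + 1)) / Real.Gamma ((d:ℝ) + 1 + ∑ i, β i)))
    (α : Fin (d+2) → ℝ) (hα : ∀ i, -1 < α i) :
    ∫⁻ x in {x : Fin (d+1) → ℝ | (∀ i, 0 ≤ x i) ∧ ∑ i, x i ≤ 1},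
      ENNReal.ofReal ((∏ i : Fin (d+1), x i ^ α i.succ) * (1 - ∑ i, x i) ^ α 0)
    = ENNReal.ofReal ((∏ i, Real.Gamma (α i + 1)) / Real.Gamma (((d:ℝ)+1) + 1 + ∑ i, α i)) := by
  classical
  set S : Set (Fin (d+1) → ℝ) := {x | (∀ i, 0 ≤ x i) ∧ ∑ i, x i ≤ 1} with hSdef
  set F : (Fin (d+1) → ℝ) → ℝ≥0∞ := fun x =>
    ENNReal.ofReal ((∏ i : Fin (d+1), x i ^ α i.succ) * (1 - ∑ i, x i) ^ α 0) with hFdef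
  set T : Set (ℝ × (Fin d → ℝ)) :=
    {p | (0 ≤ p.1 ∧ ∀ i, 0 ≤ p.2 i) ∧ p.1 + ∑ i, p.2 i ≤ 1} with hTdef
  set F' : ℝ × (Fin d → ℝ) → ℝ≥0∞ := fun p =>
    ENNReal.ofReal (p.1 ^ α 1 * (∏ i : Fin d, p.2 i ^ α i.succ.succ)
      * (1 - p.1 - ∑ i, p.2 i) ^ α 0) with hF'def
  set β : Fin (d+1) → ℝ := Fin.cons (α 0 + α 1 + 1) (fun j : Fin d => α j.succ.succ) with hβdef
  set C : ℝ := Real.Gamma (α 1 + 1) * Real.Gamma (α 0 + 1) / Real.Gamma (α 1 + α 0 + 2)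
    with hCdef
  have hβ0 : β 0 = α 0 + α 1 + 1 := by rw [hβdef]; simp
  have hβs : ∀ j : Fin d, β j.succ = α j.succ.succ := by intro j; rw [hβdef]; simp
  have hβpos : ∀ i, -1 < β i := by
    intro i
    refine Fin.cases ?_ ?_ i
    · rw [hβ0]; linarith [hα 0, hα 1]
    · intro j; rw [hβs]; exact hα _
  have hα1succ : α (0 : Fin (d+1)).succ = α 1 := by norm_num
  have hFmeas : Measurable F := by rw [hFdef]; fun_prop
  have hSm : MeasurableSet S := simplex_meas (d+1)
  have hTm : MeasurableSet T := by
    have : T = ({p : ℝ × (Fin d → ℝ) | 0 ≤ p.1} ∩ ⋂ i, {p : ℝ × (Fin d → ℝ) | 0 ≤ p.2 i})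
        ∩ {p : ℝ × (Fin d → ℝ) | p.1 + ∑ i, p.2 i ≤ 1} := by
      rw [hTdef]; ext p; simp [Set.mem_iInter]
    rw [this]
    exact ((measurableSet_le measurable_const measurable_fst).inter
      (MeasurableSet.iInter fun i => measurableSet_le measurable_const (by fun_prop))).inter
      (measurableSet_le (by fun_prop) measurable_const)
  have hF'meas : Measurable F' := by rw [hF'def]; fun_prop
  -- step 1 : pass to the product space
  have mp : MeasurePreserving
      ((MeasurableEquiv.piFinSuccAbove (fun _ : Fin (d+1) => ℝ) 0).symm)
      (((volume : Measure ℝ)).prod (volume : Measure (Fin d → ℝ))) volume :=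
    (MeasureTheory.volume_preserving_piFinSuccAbove (fun _ : Fin (d+1) => ℝ) 0).symm
  have hcons : ∀ (t : ℝ) (y : Fin d → ℝ),
      (MeasurableEquiv.piFinSuccAbove (fun _ : Fin (d+1) => ℝ) 0).symm (t, y) = Fin.cons t y := by
    intro t y
    simp [MeasurableEquiv.piFinSuccAbove, Fin.insertNthEquiv, Fin.insertNth_zero']
  have hcomp : ∀ p : ℝ × (Fin d → ℝ),
      Set.indicator S F ((MeasurableEquiv.piFinSuccAbove (fun _ : Fin (d+1) => ℝ) 0).symm p)
        = Set.indicator T F' p := by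
    rintro ⟨t, y⟩
    rw [hcons t y]
    have hmem : (Fin.cons t y : Fin (d+1) → ℝ) ∈ S ↔ (t, y) ∈ T := by
      rw [hSdef, hTdef]
      simp only [Set.mem_setOf_eq, Fin.forall_fin_succ, Fin.cons_zero, Fin.cons_succ,
        Fin.sum_univ_succ]
    have hval : F (Fin.cons t y) = F' (t, y) := by
      rw [hFdef, hF'def]
      simp only [Fin.prod_univ_succ, Fin.cons_zero, Fin.cons_succ, Fin.sum_univ_succ, hα1succ]
      congr 1
      ring_nf
    by_cases h : (t, y) ∈ T
    · rw [Set.indicator_of_mem (hmem.mpr h) F, Set.indicator_of_mem h F', hval]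
    · rw [Set.indicator_of_notMem (fun hc => h (hmem.mp hc)) F,
        Set.indicator_of_notMem h F']
  have step1 : ∫⁻ x in S, F x = ∫⁻ p, Set.indicator T F' p
      ∂(((volume : Measure ℝ)).prod (volume : Measure (Fin d → ℝ))) := by
    rw [← lintegral_indicator hSm F, ← mp.lintegral_comp (hFmeas.indicator hSm)]
    exact lintegral_congr hcomp
  -- step 2 : Tonelli
  have step2 : ∫⁻ p, Set.indicator T F' p
        ∂(((volume : Measure ℝ)).prod (volume : Measure (Fin d → ℝ)))
      = ∫⁻ y, ∫⁻ t, Set.indicator T F' (t, y) := by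
    exact lintegral_prod_symm _ (hF'meas.indicator hTm).aemeasurable
  -- nonnegativity facts
  have hC0 : 0 ≤ C := by
    rw [hCdef]
    have h1 := Real.Gamma_pos_of_pos (show (0:ℝ) < α 1 + 1 by linarith [hα 1])
    have h0 := Real.Gamma_pos_of_pos (show (0:ℝ) < α 0 + 1 by linarith [hα 0])
    have h2 := Real.Gamma_pos_of_pos (show (0:ℝ) < α 1 + α 0 + 2 by linarith [hα 0, hα 1])
    positivity
  have hae : ∀ᵐ y : Fin d → ℝ, ∑ i, y i ≠ 1 := by
    rw [ae_iff]
    simpa [not_not] using sum_hyperplane_null d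
  set G : (Fin d → ℝ) → ℝ≥0∞ := Set.indicator {y : Fin d → ℝ | (∀ i, 0 ≤ y i) ∧ ∑ i, y i ≤ 1}
    (fun y => ENNReal.ofReal ((∏ i : Fin d, y i ^ β i.succ) * (1 - ∑ i, y i) ^ β 0)
      * ENNReal.ofReal C) with hGdef
  have inner_eq : ∀ᵐ y : Fin d → ℝ, (∫⁻ t, Set.indicator T F' (t, y)) = G y := by
    filter_upwards [hae] with y hy
    by_cases hymem : (∀ i, 0 ≤ y i) ∧ ∑ i, y i ≤ 1
    case neg =>
      have hz : ∀ t : ℝ, Set.indicator T F' (t, y) = 0 := by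
        intro t
        apply Set.indicator_of_notMem
        rintro ⟨⟨ht0, hyi⟩, hts⟩
        exact hymem ⟨hyi, by linarith⟩
      simp only [hz, lintegral_zero, hGdef]
      rw [Set.indicator_of_notMem
        (show y ∉ {y : Fin d → ℝ | (∀ i, 0 ≤ y i) ∧ ∑ i, y i ≤ 1} from hymem)]
    case pos =>
      have hs1 : ∑ i, y i < 1 := lt_of_le_of_ne hymem.2 hy
      have hc : 0 < 1 - ∑ i, y i := by linarith
      have hP : 0 ≤ ∏ i : Fin d, y i ^ α i.succ.succ :=
        Finset.prod_nonneg fun i _ => Real.rpow_nonneg (hymem.1 i) _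
      have hslice : ∀ t : ℝ, Set.indicator T F' (t, y)
          = Set.indicator (Set.Icc 0 (1 - ∑ i, y i))
            (fun t => ENNReal.ofReal (t ^ α 1 * ((1 - ∑ i, y i) - t) ^ α 0)
              * ENNReal.ofReal (∏ i : Fin d, y i ^ α i.succ.succ)) t := by
        intro t
        by_cases ht : t ∈ Set.Icc 0 (1 - ∑ i, y i)
        · rw [Set.indicator_of_mem ht, Set.indicator_of_mem (show (t,y) ∈ T from
            ⟨⟨ht.1, hymem.1⟩, by linarith [ht.2]⟩)]
          rw [hF'def]
          simp only []
          rw [← ENNReal.ofReal_mul (mul_nonneg (Real.rpow_nonneg ht.1 _)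
            (Real.rpow_nonneg (by linarith [ht.2] : (0:ℝ) ≤ 1 - ∑ i, y i - t) _))]
          congr 1
          rw [show (1 : ℝ) - ∑ i, y i - t = 1 - t - ∑ i, y i by ring]
          ring
        · rw [Set.indicator_of_notMem ht, Set.indicator_of_notMem (show (t,y) ∉ T from ?_)]
          rintro ⟨⟨ht0, _⟩, hts⟩
          exact ht ⟨ht0, by linarith⟩
      calc ∫⁻ t, Set.indicator T F' (t, y)
          = ∫⁻ t in Set.Icc 0 (1 - ∑ i, y i),
              ENNReal.ofReal (t ^ α 1 * ((1 - ∑ i, y i) - t) ^ α 0)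
                * ENNReal.ofReal (∏ i : Fin d, y i ^ α i.succ.succ) := by
            rw [← lintegral_indicator measurableSet_Icc]
            exact lintegral_congr hslice
        _ = ∫⁻ t in Set.Ioc 0 (1 - ∑ i, y i),
              ENNReal.ofReal (t ^ α 1 * ((1 - ∑ i, y i) - t) ^ α 0)
                * ENNReal.ofReal (∏ i : Fin d, y i ^ α i.succ.succ) := by
            rw [Measure.restrict_congr_set Ioc_ae_eq_Icc]
        _ = (∫⁻ t in Set.Ioc 0 (1 - ∑ i, y i),
              ENNReal.ofReal (t ^ α 1 * ((1 - ∑ i, y i) - t) ^ α 0))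
                * ENNReal.ofReal (∏ i : Fin d, y i ^ α i.succ.succ) := by
            rw [lintegral_mul_const _ (by fun_prop)]
        _ = G y := by
            rw [slice_lintegral (hα 1) (hα 0) hc, hGdef, Set.indicator_of_mem
              (show y ∈ {y : Fin d → ℝ | (∀ i, 0 ≤ y i) ∧ ∑ i, y i ≤ 1} from hymem)]
            simp only [hβs, hβ0]
            rw [← ENNReal.ofReal_mul (mul_nonneg
              (Real.rpow_nonneg hc.le _) (hCdef ▸ hC0)),
              ← ENNReal.ofReal_mul (mul_nonneg hP (Real.rpow_nonneg hc.le _))]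
            rw [show α 1 + α 0 + 1 = α 0 + α 1 + 1 by ring, hCdef]
            congr 1
            ring
  -- assemble
  have hD : (0:ℝ) < (d:ℝ) + 1 + 1 + ∑ i : Fin (d+2), α i := by
    have h1 : ∑ _i : Fin (d+2), (-1 : ℝ) < ∑ i, α i :=
      Finset.sum_lt_sum_of_nonempty ⟨0, Finset.mem_univ 0⟩ (fun i _ => hα i)
    simp only [Finset.sum_const, Finset.card_univ, Fintype.card_fin, nsmul_eq_mul,
      mul_neg, mul_one] at h1
    push_cast at h1 ⊢
    linarith
  have hsums : (d:ℝ) + 1 + ∑ i, β i = (d:ℝ) + 1 + 1 + ∑ i : Fin (d+2), α i := by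
    rw [Fin.sum_univ_succ β, hβ0]
    simp only [hβs]
    rw [Fin.sum_univ_succ α, Fin.sum_univ_succ (fun i : Fin (d+1) => α i.succ), hα1succ]
    ring
  have hprodβ : (∏ i : Fin (d+1), Real.Gamma (β i + 1))
      = Real.Gamma (α 0 + α 1 + 2) * ∏ j : Fin d, Real.Gamma (α j.succ.succ + 1) := by
    rw [Fin.prod_univ_succ, hβ0]
    simp only [hβs]
    rw [show α 0 + α 1 + 1 + 1 = α 0 + α 1 + 2 by ring]
  have hprodα : (∏ i : Fin (d+2), Real.Gamma (α i + 1))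
      = Real.Gamma (α 0 + 1) * (Real.Gamma (α 1 + 1)
        * ∏ j : Fin d, Real.Gamma (α j.succ.succ + 1)) := by
    rw [Fin.prod_univ_succ, Fin.prod_univ_succ (fun i : Fin (d+1) => Real.Gamma (α i.succ + 1)),
      hα1succ]
  have hβnn : 0 ≤ (∏ i : Fin (d+1), Real.Gamma (β i + 1))
      / Real.Gamma ((d:ℝ) + 1 + ∑ i, β i) := by
    apply div_nonneg
    · exact Finset.prod_nonneg fun i _ =>
        (Real.Gamma_pos_of_pos (by linarith [hβpos i])).le
    · rw [hsums]
      exact (Real.Gamma_pos_of_pos hD).le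
  rw [step1, step2, lintegral_congr_ae inner_eq, hGdef,
    lintegral_indicator (simplex_meas d), lintegral_mul_const _ (by fun_prop),
    ih β hβpos, ← ENNReal.ofReal_mul hβnn]
  congr 1
  rw [hsums, hprodβ, hprodα, hCdef]
  have hne : Real.Gamma (α 0 + α 1 + 2) ≠ 0 :=
    (Real.Gamma_pos_of_pos (by linarith [hα 0, hα 1])).ne'
  have hDne : Real.Gamma ((d:ℝ) + 1 + 1 + ∑ i : Fin (d+2), α i) ≠ 0 :=
    (Real.Gamma_pos_of_pos hD).ne'
  rw [show α 1 + α 0 + 2 = α 0 + α 1 + 2 by ring]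
  field_simp

lemma key_all : ∀ (d : ℕ) (α : Fin (d+1) → ℝ), (∀ i, -1 < α i) →
    (∫⁻ x in {x : Fin d → ℝ | (∀ i, 0 ≤ x i) ∧ ∑ i, x i ≤ 1},
      ENNReal.ofReal ((∏ i : Fin d, x i ^ α i.succ) * (1 - ∑ i, x i) ^ α 0))
    = ENNReal.ofReal ((∏ i, Real.Gamma (α i + 1)) / Real.Gamma ((d:ℝ) + 1 + ∑ i, α i))
  | 0, α, hα => key_zero α hα
  | (d+1), α, hα => by
      have h := key_succ d (fun β hβ => key_all d β hβ) α hα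
      push_cast
      exact h

/-- Moment formula on the standard `d`-simplex (Lemma 1). -/
theorem simplex_moment_formula (d : ℕ) (hd : 1 ≤ d) (α : Fin (d + 1) → ℝ)
    (hα : ∀ i, -1 < α i) :
    (∫ x in {x : Fin d → ℝ | (∀ i, 0 ≤ x i) ∧ ∑ i, x i ≤ 1},
        (∏ i : Fin d, x i ^ α i.succ) * (1 - ∑ i, x i) ^ α 0) =
      (∏ i : Fin (d + 1), Real.Gamma (α i + 1)) /
        Real.Gamma ((d : ℝ) + 1 + ∑ i, α i) := by
  have hSm := simplex_meas d
  have hnn : 0 ≤ᵐ[volume.restrict {x : Fin d → ℝ | (∀ i, 0 ≤ x i) ∧ ∑ i, x i ≤ 1}]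
      fun x => (∏ i : Fin d, x i ^ α i.succ) * (1 - ∑ i, x i) ^ α 0 := by
    filter_upwards [ae_restrict_mem hSm] with x hx
    exact mul_nonneg (Finset.prod_nonneg fun i _ => Real.rpow_nonneg (hx.1 i) _)
      (Real.rpow_nonneg (by linarith [hx.2]) _)
  rw [MeasureTheory.integral_eq_lintegral_of_nonneg_ae hnn
    ((by fun_prop : Measurable fun x : Fin d → ℝ =>
      (∏ i : Fin d, x i ^ α i.succ) * (1 - ∑ i, x i) ^ α 0).aestronglyMeasurable)]
  rw [key_all d α hα]
  have hD : (0:ℝ) < (d:ℝ) + 1 + ∑ i : Fin (d+1), α i := by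
    have h1 : ∑ _i : Fin (d+1), (-1 : ℝ) < ∑ i, α i :=
      Finset.sum_lt_sum_of_nonempty ⟨0, Finset.mem_univ 0⟩ (fun i _ => hα i)
    simp only [Finset.sum_const, Finset.card_univ, Fintype.card_fin, nsmul_eq_mul,
      mul_neg, mul_one] at h1
    push_cast at h1 ⊢
    linarith
  exact ENNReal.toReal_ofReal (div_nonneg
    (Finset.prod_nonneg fun i _ => (Real.Gamma_pos_of_pos (by linarith [hα i])).le)
    (Real.Gamma_pos_of_pos hD).le)
end

section
/- Let Δ₃ = {(x,y,z) ∈ ℝ³ : x ≥ 0, y ≥ 0, z ≥ 0, x + y + z ≤ 1} be the standard 3-simplex with barycentric coordinates λ₁ = x, λ₂ = y, λ₃ = z, λ₄ = 1 − x − y − z, let β > 0, and let Ω^{(β)} = (Γ(4β)/Γ(β)⁴)(λ₁λ₂λ₃λ₄)^{β−1} be the symmetric Dirichlet density on Δ₃. With h_β = β²/(2(2β+1)(4β+1)) and k_β = β/(2(2β+1)), and ρ = λ₁λ₂ + h_β − k_β(λ₁ + λ₂), the polynomial ρ is orthogonal to all affine functions with respect to Ω^{(β)}: ∫_{Δ₃}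 ρ Ω^{(β)} dx = 0 and ∫_{Δ₃} ρ λ_r Ω^{(β)} dx = 0 for r = 1, 2, 3, 4. -/
open MeasureTheory

noncomputable section

/-- The standard 3-simplex in `ℝ³`. -/
def simplex3 : Set (Fin 3 → ℝ) :=
  {x | 0 ≤ x 0 ∧ 0 ≤ x 1 ∧ 0 ≤ x 2 ∧ x 0 + x 1 + x 2 ≤ 1}

/-- Barycentric coordinates on the standard 3-simplex. -/
def lam : Fin 4 → (Fin 3 → ℝ) → ℝ :=
  ![fun x => x 0, fun x => x 1, fun x => x 2, fun x => 1 - x 0 - x 1 - x 2]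

/-- The symmetric Dirichlet density of parameter `β` on the standard 3-simplex. -/
def dirichlet3 (β : ℝ) : (Fin 3 → ℝ) → ℝ := fun x =>
  Real.Gamma (4 * β) / (Real.Gamma β) ^ 4 * (lam 0 x * lam 1 x * lam 2 x * lam 3 x) ^ (β - 1)

/-- The volumetric quadratic polynomial `ρ = λ₁λ₂ + h_β − k_β(λ₁+λ₂)`. -/
def rhoBeta (β : ℝ) : (Fin 3 → ℝ) → ℝ := fun x =>
  lam 0 x * lam 1 x + β ^ 2 / (2 * (2 * β + 1) * (4 * β + 1)) -
    β / (2 * (2 * β + 1)) * (lam 0 x + lam 1 x)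

/-! ### Auxiliary development: Dirichlet moments on the simplex -/

open intervalIntegral Set
open scoped ENNReal

namespace RhoAux

/-- Pointwise match between the complex beta integrand and the real one. -/
lemma cpow_eq_ofReal {x : ℝ} (hx : 0 ≤ x) (p : ℝ) :
    (x : ℂ) ^ ((p : ℂ) - 1) = ((x ^ (p - 1) : ℝ) : ℂ) := by
  rw [show ((p : ℂ) - 1) = ((p - 1 : ℝ) : ℂ) by push_cast; ring, ← Complex.ofReal_cpow hx]

lemma betaIntegrand_eq {x : ℝ} (hx0 : 0 ≤ x) (hx1 : x ≤ 1) (p q : ℝ) :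
    ((x : ℂ) ^ ((p : ℂ) - 1) * ((1 : ℂ) - x) ^ ((q : ℂ) - 1)) =
      ((x ^ (p - 1) * (1 - x) ^ (q - 1) : ℝ) : ℂ) := by
  have h1 : ((1 : ℂ) - x) = ((1 - x : ℝ) : ℂ) := by push_cast; ring
  rw [h1, cpow_eq_ofReal hx0, cpow_eq_ofReal (by linarith) q]
  push_cast
  ring

lemma realBeta_intervalIntegrable {p q : ℝ} (hp : 0 < p) (hq : 0 < q) :
    IntervalIntegrable (fun x : ℝ => x ^ (p - 1) * (1 - x) ^ (q - 1)) volume 0 1 := by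
  have hC := Complex.betaIntegral_convergent (u := p) (v := q) (by simpa) (by simpa)
  rw [intervalIntegrable_iff_integrableOn_Ioc_of_le (by norm_num)] at hC ⊢
  have hre : IntegrableOn (fun x : ℝ =>
      ((x : ℂ) ^ ((p : ℂ) - 1) * ((1:ℂ) - x) ^ ((q : ℂ) - 1)).re) (Ioc 0 1) volume := hC.re
  refine IntegrableOn.congr_fun hre (fun x hx => ?_) measurableSet_Ioc
  rw [betaIntegrand_eq hx.1.le hx.2 p q, Complex.ofReal_re]

lemma realBeta_value {p q : ℝ} (hp : 0 < p) (hq : 0 < q) :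
    ∫ x in (0:ℝ)..1, x ^ (p - 1) * (1 - x) ^ (q - 1) =
      Real.Gamma p * Real.Gamma q / Real.Gamma (p + q) := by
  have key := Complex.Gamma_mul_Gamma_eq_betaIntegral (s := p) (t := q) (by simpa) (by simpa)
  rw [Complex.betaIntegral] at key
  have heq : (∫ x in (0:ℝ)..1, (x : ℂ) ^ ((p : ℂ) - 1) * ((1:ℂ) - x) ^ ((q : ℂ) - 1)) =
      ((∫ x in (0:ℝ)..1, x ^ (p - 1) * (1 - x) ^ (q - 1) : ℝ) : ℂ) := by
    rw [← intervalIntegral.integral_ofReal]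
    refine intervalIntegral.integral_congr fun x hx => ?_
    rw [uIcc_of_le (by norm_num)] at hx
    exact betaIntegrand_eq hx.1 hx.2 p q
  rw [heq] at key
  have hGpq : Real.Gamma (p + q) ≠ 0 := (Real.Gamma_pos_of_pos (by linarith)).ne'
  have : Real.Gamma p * Real.Gamma q =
      Real.Gamma (p + q) * ∫ x in (0:ℝ)..1, x ^ (p - 1) * (1 - x) ^ (q - 1) := by
    have := key
    rw [show ((p : ℂ) + q) = ((p + q : ℝ) : ℂ) by push_cast; ring] at this
    rw [Complex.Gamma_ofReal, Complex.Gamma_ofReal, Complex.Gamma_ofReal] at this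
    exact_mod_cast this
  rw [this]; field_simp

lemma scaled_eq {p q T : ℝ} (hT : 0 < T) {x : ℝ} (hx0 : 0 ≤ x) (hx1 : x ≤ T) :
    x ^ (p - 1) * (T - x) ^ (q - 1) =
      T ^ (p - 1) * T ^ (q - 1) * ((x / T) ^ (p - 1) * (1 - x / T) ^ (q - 1)) := by
  have h1 : (x / T) ^ (p - 1) = x ^ (p-1) / T ^ (p-1) := Real.div_rpow hx0 hT.le _
  have h2 : (1 - x / T) = (T - x) / T := by field_simp
  have h3 : ((T - x)/T) ^ (q - 1) = (T-x) ^ (q-1) / T ^ (q-1) :=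
    Real.div_rpow (by linarith : (0:ℝ) ≤ T - x) hT.le _
  have hTp : T ^ (p-1) ≠ 0 := (Real.rpow_pos_of_pos hT _).ne'
  have hTq : T ^ (q-1) ≠ 0 := (Real.rpow_pos_of_pos hT _).ne'
  rw [h1, h2, h3]; field_simp

lemma scaled_integrableOn {p q T : ℝ} (hp : 0 < p) (hq : 0 < q) (hT : 0 < T) :
    IntegrableOn (fun x : ℝ => x ^ (p - 1) * (T - x) ^ (q - 1)) (Ioc 0 T) volume := by
  have hg := realBeta_intervalIntegrable hp hq
  have hcomp : IntervalIntegrable (fun x : ℝ => (x / T) ^ (p - 1) * (1 - x / T) ^ (q - 1))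
      volume 0 T := by
    have := hg.comp_mul_right (c := T⁻¹)
    simpa [div_eq_mul_inv, inv_inv] using this
  have h2 : IntervalIntegrable
      (fun x : ℝ => T ^ (p - 1) * T ^ (q - 1) * ((x / T) ^ (p - 1) * (1 - x / T) ^ (q - 1)))
      volume 0 T := (hcomp.const_mul _)
  rw [intervalIntegrable_iff_integrableOn_Ioc_of_le hT.le] at h2
  exact h2.congr_fun (fun x hx => (scaled_eq hT hx.1.le hx.2).symm) measurableSet_Ioc

lemma scaled_value {p q T : ℝ} (hp : 0 < p) (hq : 0 < q) (hT : 0 < T) :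
    ∫ x in Ioc (0:ℝ) T, x ^ (p - 1) * (T - x) ^ (q - 1) =
      T ^ (p + q - 1) * (Real.Gamma p * Real.Gamma q / Real.Gamma (p + q)) := by
  rw [← intervalIntegral.integral_of_le hT.le]
  have hcong : ∫ x in (0:ℝ)..T, x ^ (p - 1) * (T - x) ^ (q - 1) =
      ∫ x in (0:ℝ)..T, T ^ (p - 1) * T ^ (q - 1) *
        ((x / T) ^ (p - 1) * (1 - x / T) ^ (q - 1)) := by
    refine intervalIntegral.integral_congr fun x hx => ?_
    rw [uIcc_of_le hT.le] at hx
    exact scaled_eq hT hx.1 hx.2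
  rw [hcong, intervalIntegral.integral_const_mul]
  have hsub : ∫ x in (0:ℝ)..T, ((x / T) ^ (p - 1) * (1 - x / T) ^ (q - 1)) =
      T • ∫ u in (0:ℝ)..1, u ^ (p - 1) * (1 - u) ^ (q - 1) := by
    have h := intervalIntegral.integral_comp_div (a := (0:ℝ)) (b := T) (c := T)
      (fun u : ℝ => u ^ (p - 1) * (1 - u) ^ (q - 1)) hT.ne'
    simpa [div_self hT.ne'] using h
  rw [hsub, realBeta_value hp hq, smul_eq_mul]
  rw [show T ^ (p + q - 1) = T ^ (p - 1) * T ^ (q - 1) * T by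
    rw [← Real.rpow_add hT, ← Real.rpow_add_one hT.ne']; ring_nf]
  ring

lemma lint_step {p q T : ℝ} (hp : 0 < p) (hq : 0 < q) (hT : 0 < T) :
    ∫⁻ x in Ioc (0:ℝ) T, ENNReal.ofReal (x ^ (p - 1) * (T - x) ^ (q - 1)) =
      ENNReal.ofReal (T ^ (p + q - 1) *
        (Real.Gamma p * Real.Gamma q / Real.Gamma (p + q))) := by
  rw [← ofReal_integral_eq_lintegral_ofReal (scaled_integrableOn hp hq hT) ?_]
  · rw [scaled_value hp hq hT]
  · refine (ae_restrict_iff' measurableSet_Ioc).2 (ae_of_all _ fun x hx => ?_)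
    exact mul_nonneg (Real.rpow_nonneg hx.1.le _) (Real.rpow_nonneg (by linarith [hx.2]) _)

/-- The basic monomial integrand on the simplex. -/
def mono (p q r s : ℝ) : (Fin 3 → ℝ) → ℝ := fun x =>
  x 0 ^ (p - 1) * (x 1 ^ (q - 1) * (x 2 ^ (r - 1) * (1 - x 0 - x 1 - x 2) ^ (s - 1)))

lemma measurable_mono (p q r s : ℝ) : Measurable (mono p q r s) := by
  unfold mono
  fun_prop

lemma measurableSet_simplex3 : MeasurableSet simplex3 := by
  unfold simplex3
  simp only [Set.setOf_and]
  have h : ∀ i : Fin 3, Measurable fun x : Fin 3 → ℝ => x i := fun i => measurable_pi_apply i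
  exact (measurableSet_le measurable_const (h 0)).inter
    ((measurableSet_le measurable_const (h 1)).inter
    ((measurableSet_le measurable_const (h 2)).inter
    (measurableSet_le (((h 0).add (h 1)).add (h 2)) measurable_const)))

def ψ : ℝ × ℝ × ℝ ≃ᵐ (Fin 3 → ℝ) :=
  ((MeasurableEquiv.refl ℝ).prodCongr (MeasurableEquiv.finTwoArrow (α := ℝ)).symm).trans
    (MeasurableEquiv.piFinSuccAbove (fun _ : Fin 3 => ℝ) 0).symm

lemma ψ_apply (a b c : ℝ) : ψ (a, b, c) = ![a, b, c] := by
  funext i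
  fin_cases i <;> rfl

lemma ψ_mp : MeasurePreserving ψ (volume : Measure (ℝ × ℝ × ℝ)) volume := by
  have h2 : MeasurePreserving (MeasurableEquiv.finTwoArrow (α := ℝ)).symm
      (volume : Measure (ℝ × ℝ)) volume := by
    have := (measurePreserving_finTwoArrow (volume : Measure ℝ)).symm
    rwa [← volume_pi, ← Measure.volume_eq_prod] at this
  have h1 : MeasurePreserving
      ((MeasurableEquiv.refl ℝ).prodCongr (MeasurableEquiv.finTwoArrow (α := ℝ)).symm)
      (volume : Measure (ℝ × ℝ × ℝ)) volume := by
    have := (MeasurePreserving.id (volume : Measure ℝ)).prod h2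
    rwa [← Measure.volume_eq_prod, ← Measure.volume_eq_prod] at this
  exact ((volume_preserving_piFinSuccAbove (fun _ : Fin 3 => ℝ) 0).symm).comp h1

lemma lint_level {u v : ℝ} (C T : ℝ) (hu : 0 < u) (hv : 0 < v) (hC : 0 ≤ C) (hT : 0 < T) :
    ∫⁻ t in Ioc (0:ℝ) T, ENNReal.ofReal (C * (t ^ (u - 1) * (T - t) ^ (v - 1))) =
      ENNReal.ofReal (C * (T ^ (u + v - 1) *
        (Real.Gamma u * Real.Gamma v / Real.Gamma (u + v)))) := by
  simp_rw [ENNReal.ofReal_mul hC]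
  rw [lintegral_const_mul' _ _ ENNReal.ofReal_ne_top, lint_step hu hv hT]

lemma lint_moment {p q r s : ℝ} (hp : 0 < p) (hq : 0 < q) (hr : 0 < r) (hs : 0 < s) :
    ∫⁻ x in simplex3, ENNReal.ofReal (mono p q r s x) =
      ENNReal.ofReal (Real.Gamma p * Real.Gamma q * Real.Gamma r * Real.Gamma s /
        Real.Gamma (p + q + r + s)) := by
  set G : (Fin 3 → ℝ) → ℝ≥0∞ := fun x => ENNReal.ofReal (mono p q r s x) with hGdef
  have hGm : Measurable G := (measurable_mono p q r s).ennreal_ofReal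
  set H : ℝ → ℝ → ℝ → ℝ≥0∞ := fun a b c => G ![a, b, c] with hHdef
  have hSm := measurableSet_simplex3
  have hF : Measurable fun z : ℝ × ℝ × ℝ => (simplex3.indicator G) (ψ z) :=
    (hGm.indicator hSm).comp ψ.measurable
  have key : ∀ a b c : ℝ, (simplex3.indicator G) (ψ (a, (b, c))) =
      (Icc (0:ℝ) 1).indicator (fun a' =>
        (Icc (0:ℝ) (1 - a')).indicator (fun b' =>
          (Icc (0:ℝ) (1 - a' - b')).indicator (H a' b') c) b) a := by
    intro a b c
    have h1 : (![a, b, c] ∈ simplex3) ↔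
        (a ∈ Icc (0:ℝ) 1 ∧ b ∈ Icc (0:ℝ) (1 - a) ∧ c ∈ Icc (0:ℝ) (1 - a - b)) := by
      simp only [mem_Icc, simplex3, Set.mem_setOf_eq,
        show (![a, b, c] : Fin 3 → ℝ) 0 = a from rfl,
        show (![a, b, c] : Fin 3 → ℝ) 1 = b from rfl,
        show (![a, b, c] : Fin 3 → ℝ) 2 = c from rfl]
      constructor
      · rintro ⟨h1, h2, h3, h4⟩
        exact ⟨⟨h1, by linarith⟩, ⟨h2, by linarith⟩, ⟨h3, by linarith⟩⟩
      · rintro ⟨⟨h1, h1'⟩, ⟨h2, h2'⟩, ⟨h3, h3'⟩⟩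
        exact ⟨h1, h2, h3, by linarith⟩
    simp only [ψ_apply, Set.indicator_apply, h1]
    by_cases ha : a ∈ Icc (0:ℝ) 1 <;> by_cases hb : b ∈ Icc (0:ℝ) (1 - a) <;>
      by_cases hc : c ∈ Icc (0:ℝ) (1 - a - b) <;> simp [ha, hb, hc, hHdef, h1]
  rw [← lintegral_indicator hSm, ← ψ_mp.lintegral_comp (hGm.indicator hSm)]
  rw [Measure.volume_eq_prod, lintegral_prod _ hF.aemeasurable]
  have hsplit : ∀ a : ℝ, (∫⁻ bc : ℝ × ℝ, (simplex3.indicator G) (ψ (a, bc))) =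
      ∫⁻ b, ∫⁻ c, (simplex3.indicator G) (ψ (a, (b, c))) := by
    intro a
    rw [Measure.volume_eq_prod]
    exact lintegral_prod (fun bc => (simplex3.indicator G) (ψ (a, bc)))
      ((hF.comp measurable_prodMk_left).aemeasurable)
  simp_rw [hsplit, key]
  have swap : ∀ (s : Set ℝ) (x : ℝ) (g : ℝ → ℝ → ℝ≥0∞),
      (∫⁻ t, s.indicator (fun y => g y t) x) = s.indicator (fun y => ∫⁻ t, g y t) x := by
    intro s x g
    by_cases hx : x ∈ s <;> simp [hx]
  simp_rw [swap]
  have step_c : ∀ a ∈ Ioo (0:ℝ) 1, ∀ b ∈ Ioo (0:ℝ) (1 - a),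
      (∫⁻ c, (Icc (0:ℝ) (1 - a - b)).indicator (H a b) c) =
        ENNReal.ofReal ((a ^ (p - 1) *
            (Real.Gamma r * Real.Gamma s / Real.Gamma (r + s))) *
          (b ^ (q - 1) * ((1 - a) - b) ^ (r + s - 1))) := by
    intro a ha b hb
    have hT : 0 < 1 - a - b := by linarith [hb.2]
    rw [lintegral_indicator measurableSet_Icc,
      show (volume.restrict (Icc (0:ℝ) (1 - a - b))) = volume.restrict (Ioc 0 (1 - a - b)) from
        (Measure.restrict_congr_set Ioc_ae_eq_Icc).symm]
    have hcong : ∫⁻ c in Ioc (0:ℝ) (1 - a - b), H a b c =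
        ∫⁻ c in Ioc (0:ℝ) (1 - a - b),
          ENNReal.ofReal ((a ^ (p - 1) * b ^ (q - 1)) *
            (c ^ (r - 1) * ((1 - a - b) - c) ^ (s - 1))) := by
      refine setLIntegral_congr_fun measurableSet_Ioc (fun c hc => ?_)
      simp only [hHdef, hGdef, mono,
        show (![a, b, c] : Fin 3 → ℝ) 0 = a from rfl,
        show (![a, b, c] : Fin 3 → ℝ) 1 = b from rfl,
        show (![a, b, c] : Fin 3 → ℝ) 2 = c from rfl]
      congr 1
      ring
    rw [hcong, lint_level _ _ hr hs
      (mul_nonneg (Real.rpow_nonneg ha.1.le _) (Real.rpow_nonneg hb.1.le _)) hT]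
    congr 1
    rw [show (1:ℝ) - a - b = (1 - a) - b from by ring]
    ring
  have step_b : ∀ a ∈ Ioo (0:ℝ) 1,
      (∫⁻ b, (Icc (0:ℝ) (1 - a)).indicator (fun b =>
          ∫⁻ c, (Icc (0:ℝ) (1 - a - b)).indicator (H a b) c) b) =
        ENNReal.ofReal (((Real.Gamma r * Real.Gamma s / Real.Gamma (r + s)) *
            (Real.Gamma q * Real.Gamma (r + s) / Real.Gamma (q + (r + s)))) *
          (a ^ (p - 1) * (1 - a) ^ (q + (r + s) - 1))) := by
    intro a ha
    have hS : 0 < 1 - a := by linarith [ha.2]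
    rw [lintegral_indicator measurableSet_Icc,
      show (volume.restrict (Icc (0:ℝ) (1 - a))) = volume.restrict (Ioo 0 (1 - a)) from
        (Measure.restrict_congr_set Ioo_ae_eq_Icc).symm]
    have hcong : ∫⁻ b in Ioo (0:ℝ) (1 - a),
        (∫⁻ c, (Icc (0:ℝ) (1 - a - b)).indicator (H a b) c) =
        ∫⁻ b in Ioo (0:ℝ) (1 - a),
          ENNReal.ofReal ((a ^ (p - 1) *
              (Real.Gamma r * Real.Gamma s / Real.Gamma (r + s))) *
            (b ^ (q - 1) * ((1 - a) - b) ^ (r + s - 1))) :=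
      setLIntegral_congr_fun measurableSet_Ioo
        (fun b hb => step_c a ha b hb)
    rw [hcong,
      show (volume.restrict (Ioo (0:ℝ) (1 - a))) = volume.restrict (Ioc 0 (1 - a)) from
        Measure.restrict_congr_set Ioo_ae_eq_Ioc,
      lint_level _ _ hq (by positivity)
        (mul_nonneg (Real.rpow_nonneg ha.1.le _) (by positivity)) hS]
    congr 1
    ring
  rw [lintegral_indicator measurableSet_Icc,
    show (volume.restrict (Icc (0:ℝ) 1)) = volume.restrict (Ioo 0 1) from
      (Measure.restrict_congr_set Ioo_ae_eq_Icc).symm]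
  have hcong : ∫⁻ a in Ioo (0:ℝ) 1,
      (∫⁻ b, (Icc (0:ℝ) (1 - a)).indicator (fun b =>
          ∫⁻ c, (Icc (0:ℝ) (1 - a - b)).indicator (H a b) c) b) =
      ∫⁻ a in Ioo (0:ℝ) 1,
        ENNReal.ofReal (((Real.Gamma r * Real.Gamma s / Real.Gamma (r + s)) *
            (Real.Gamma q * Real.Gamma (r + s) / Real.Gamma (q + (r + s)))) *
          (a ^ (p - 1) * ((1:ℝ) - a) ^ (q + (r + s) - 1))) :=
    setLIntegral_congr_fun measurableSet_Ioo (fun a ha => step_b a ha)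
  rw [hcong,
    show (volume.restrict (Ioo (0:ℝ) 1)) = volume.restrict (Ioc 0 1) from
      Measure.restrict_congr_set Ioo_ae_eq_Ioc,
    lint_level _ _ hp (by positivity) (by positivity) one_pos]
  congr 1
  rw [Real.one_rpow]
  have h1 : Real.Gamma (r + s) ≠ 0 := (Real.Gamma_pos_of_pos (by linarith)).ne'
  have h2 : Real.Gamma (q + (r + s)) ≠ 0 := (Real.Gamma_pos_of_pos (by linarith)).ne'
  have h3 : Real.Gamma (p + (q + (r + s))) > 0 := Real.Gamma_pos_of_pos (by linarith)
  rw [show p + q + r + s = p + (q + (r + s)) from by ring]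
  field_simp

lemma mono_nonneg_on {p q r s : ℝ} {x : Fin 3 → ℝ} (hx : x ∈ simplex3) :
    0 ≤ mono p q r s x := by
  obtain ⟨h0, h1, h2, h3⟩ := hx
  have hd : (0:ℝ) ≤ 1 - x 0 - x 1 - x 2 := by linarith
  unfold mono
  have := Real.rpow_nonneg h0 (p - 1)
  have := Real.rpow_nonneg h1 (q - 1)
  have := Real.rpow_nonneg h2 (r - 1)
  have := Real.rpow_nonneg hd (s - 1)
  positivity

lemma integrableOn_mono {p q r s : ℝ} (hp : 0 < p) (hq : 0 < q) (hr : 0 < r) (hs : 0 < s) :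
    IntegrableOn (mono p q r s) simplex3 := by
  refine ⟨(measurable_mono p q r s).aestronglyMeasurable, ?_⟩
  rw [hasFiniteIntegral_iff_norm]
  have hcong : ∫⁻ x in simplex3, ENNReal.ofReal ‖mono p q r s x‖ =
      ∫⁻ x in simplex3, ENNReal.ofReal (mono p q r s x) :=
    setLIntegral_congr_fun measurableSet_simplex3 (fun x hx => by
      rw [Real.norm_of_nonneg (mono_nonneg_on hx)])
  rw [hcong, lint_moment hp hq hr hs]
  exact ENNReal.ofReal_lt_top

lemma setIntegral_mono_eq {p q r s : ℝ} (hp : 0 < p) (hq : 0 < q) (hr : 0 < r) (hs : 0 < s) :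
    ∫ x in simplex3, mono p q r s x =
      Real.Gamma p * Real.Gamma q * Real.Gamma r * Real.Gamma s /
        Real.Gamma (p + q + r + s) := by
  rw [integral_eq_lintegral_of_nonneg_ae
    ((ae_restrict_iff' measurableSet_simplex3).2 (ae_of_all _ fun x hx => mono_nonneg_on hx))
    (measurable_mono p q r s).aestronglyMeasurable.restrict,
    lint_moment hp hq hr hs, ENNReal.toReal_ofReal]
  have h1 : 0 < Real.Gamma p := Real.Gamma_pos_of_pos hp
  have h2 : 0 < Real.Gamma q := Real.Gamma_pos_of_pos hq
  have h3 : 0 < Real.Gamma r := Real.Gamma_pos_of_pos hr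
  have h4 : 0 < Real.Gamma s := Real.Gamma_pos_of_pos hs
  have h5 : 0 < Real.Gamma (p + q + r + s) := Real.Gamma_pos_of_pos (by linarith)
  positivity

lemma lam0_eq (x : Fin 3 → ℝ) : lam 0 x = x 0 := rfl
lemma lam1_eq (x : Fin 3 → ℝ) : lam 1 x = x 1 := rfl
lemma lam2_eq (x : Fin 3 → ℝ) : lam 2 x = x 2 := rfl
lemma lam3_eq (x : Fin 3 → ℝ) : lam 3 x = 1 - x 0 - x 1 - x 2 := rfl

lemma rpow_shift1 {t β : ℝ} (ht : 0 ≤ t) (hβ : 0 < β) : t ^ (β + 1 - 1) = t * t ^ (β - 1) := by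
  rcases eq_or_lt_of_le ht with h | h
  · rw [← h, show β + 1 - 1 = β from by ring, Real.zero_rpow hβ.ne', zero_mul]
  · rw [show β + 1 - 1 = β - 1 + 1 from by ring, Real.rpow_add_one h.ne']; ring

lemma rpow_shift2 {t β : ℝ} (ht : 0 ≤ t) (hβ : 0 < β) :
    t ^ (β + 2 - 1) = t * (t * t ^ (β - 1)) := by
  rcases eq_or_lt_of_le ht with h | h
  · rw [← h, show β + 2 - 1 = β + 1 from by ring, Real.zero_rpow (by positivity), zero_mul]
  · rw [show β + 2 - 1 = β - 1 + 1 + 1 from by ring, Real.rpow_add_one (by positivity),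
      Real.rpow_add_one h.ne']
    ring

lemma dirichlet3_eq {β : ℝ} {x : Fin 3 → ℝ} (hx : x ∈ simplex3) :
    dirichlet3 β x = Real.Gamma (4 * β) / Real.Gamma β ^ 4 *
      (x 0 ^ (β - 1) * (x 1 ^ (β - 1) * (x 2 ^ (β - 1) *
        (1 - x 0 - x 1 - x 2) ^ (β - 1)))) := by
  obtain ⟨h0, h1, h2, h3⟩ := hx
  have hd : (0:ℝ) ≤ 1 - x 0 - x 1 - x 2 := by linarith
  unfold dirichlet3
  rw [lam0_eq, lam1_eq, lam2_eq, lam3_eq,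
    Real.mul_rpow (by positivity) hd, Real.mul_rpow (by positivity) h2,
    Real.mul_rpow h0 h1]
  ring

end RhoAux

open RhoAux

set_option maxHeartbeats 2000000 in
/-- `ρ = λ₁λ₂ + h_β − k_β(λ₁+λ₂)` is orthogonal to all affine functions on the standard
3-simplex with respect to the symmetric Dirichlet density `Ω^{(β)}`. -/
theorem rhoBeta_orthogonal_to_affine (β : ℝ) (hβ : 0 < β) :
    (∫ x in simplex3, rhoBeta β x * dirichlet3 β x = 0) ∧
      (∀ r : Fin 4, ∫ x in simplex3, rhoBeta β x * lam r x * dirichlet3 β x = 0) := by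
  have hβ1 : (0:ℝ) < β + 1 := by linarith
  have hβ2 : (0:ℝ) < β + 2 := by linarith
  set C := Real.Gamma (4 * β) / Real.Gamma β ^ 4 with hC
  set hB := β ^ 2 / (2 * (2 * β + 1) * (4 * β + 1)) with hhB
  set kB := β / (2 * (2 * β + 1)) with hkB
  have G1 : Real.Gamma (β + 1) = β * Real.Gamma β := Real.Gamma_add_one hβ.ne'
  have G2 : Real.Gamma (β + 2) = (β + 1) * (β * Real.Gamma β) := by
    rw [show (β + 2 : ℝ) = (β + 1) + 1 from by ring, Real.Gamma_add_one (by positivity), G1]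
  have D1 : Real.Gamma (4*β + 1) = 4*β * Real.Gamma (4*β) := Real.Gamma_add_one (by positivity)
  have D2 : Real.Gamma (4*β + 2) = (4*β+1) * (4*β * Real.Gamma (4*β)) := by
    rw [show (4*β + 2 : ℝ) = (4*β + 1) + 1 from by ring, Real.Gamma_add_one (by positivity), D1]
  have D3 : Real.Gamma (4*β + 3) = (4*β+2) * ((4*β+1) * (4*β * Real.Gamma (4*β))) := by
    rw [show (4*β + 3 : ℝ) = (4*β + 2) + 1 from by ring, Real.Gamma_add_one (by positivity), D2]
  have hg : Real.Gamma β ≠ 0 := (Real.Gamma_pos_of_pos hβ).ne'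
  have hG : Real.Gamma (4*β) ≠ 0 := (Real.Gamma_pos_of_pos (by positivity)).ne'
  have h1 : (4*β+1 : ℝ) ≠ 0 := by positivity
  have h2 : (2*β+1 : ℝ) ≠ 0 := by positivity
  have h3 : (4*β+2 : ℝ) ≠ 0 := by positivity
  constructor
  · have heq : Set.EqOn (fun x => rhoBeta β x * dirichlet3 β x)
        (fun x => C * (mono (β+1) (β+1) β β x + hB * mono β β β β x
          - kB * (mono (β+1) β β β x + mono β (β+1) β β x))) simplex3 := by
      intro x hx
      obtain ⟨h0', h1', h2', h3'⟩ := hx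
      simp only [rhoBeta, dirichlet3_eq (⟨h0', h1', h2', h3'⟩ : x ∈ simplex3), mono,
        lam0_eq, lam1_eq]
      rw [rpow_shift1 h0' hβ, rpow_shift1 h1' hβ]
      ring
    rw [setIntegral_congr_fun measurableSet_simplex3 heq]
    have i1 := integrableOn_mono hβ1 hβ1 hβ hβ
    have i2 := integrableOn_mono hβ hβ hβ hβ
    have i3 := integrableOn_mono hβ1 hβ hβ hβ
    have i4 := integrableOn_mono hβ hβ1 hβ hβ
    have I12 : Integrable (fun x => mono (β+1) (β+1) β β x + hB * mono β β β β x)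
        (volume.restrict simplex3) := i1.add (i2.const_mul hB)
    have I34 : Integrable (fun x => kB * (mono (β+1) β β β x + mono β (β+1) β β x))
        (volume.restrict simplex3) := (i3.add i4).const_mul kB
    have I2' : Integrable (fun x => hB * mono β β β β x) (volume.restrict simplex3) :=
      i2.const_mul hB
    rw [MeasureTheory.integral_const_mul, integral_sub I12 I34,
      integral_add i1 I2', MeasureTheory.integral_const_mul, MeasureTheory.integral_const_mul,
      integral_add i3 i4,
      setIntegral_mono_eq hβ1 hβ1 hβ hβ, setIntegral_mono_eq hβ hβ hβ hβ,
      setIntegral_mono_eq hβ1 hβ hβ hβ, setIntegral_mono_eq hβ hβ1 hβ hβ]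
    rw [show β + 1 + (β + 1) + β + β = 4*β + 2 from by ring,
      show β + β + β + β = 4*β from by ring,
      show β + 1 + β + β + β = 4*β + 1 from by ring,
      show β + (β + 1) + β + β = 4*β + 1 from by ring]
    rw [G1, D1, D2, hhB, hkB, hC]
    field_simp
    ring
  · intro r
    fin_cases r
    · -- r = 0
      show ∫ x in simplex3, rhoBeta β x * lam 0 x * dirichlet3 β x = 0
      have heq : Set.EqOn (fun x => rhoBeta β x * lam 0 x * dirichlet3 β x)
          (fun x => C * (mono (β+2) (β+1) β β x + hB * mono (β+1) β β β x
            - kB * (mono (β+2) β β β x + mono (β+1) (β+1) β β x))) simplex3 := by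
        intro x hx
        obtain ⟨h0', h1', h2', h3'⟩ := hx
        simp only [rhoBeta, dirichlet3_eq (⟨h0', h1', h2', h3'⟩ : x ∈ simplex3), mono,
          lam0_eq, lam1_eq]
        rw [rpow_shift1 h0' hβ, rpow_shift1 h1' hβ, rpow_shift2 h0' hβ]
        ring
      rw [setIntegral_congr_fun measurableSet_simplex3 heq]
      have i1 := integrableOn_mono hβ2 hβ1 hβ hβ
      have i2 := integrableOn_mono hβ1 hβ hβ hβ
      have i3 := integrableOn_mono hβ2 hβ hβ hβ
      have i4 := integrableOn_mono hβ1 hβ1 hβ hβ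
      have I12 : Integrable (fun x => mono (β+2) (β+1) β β x + hB * mono (β+1) β β β x)
          (volume.restrict simplex3) := i1.add (i2.const_mul hB)
      have I34 : Integrable (fun x => kB * (mono (β+2) β β β x + mono (β+1) (β+1) β β x))
          (volume.restrict simplex3) := (i3.add i4).const_mul kB
      have I2' : Integrable (fun x => hB * mono (β+1) β β β x) (volume.restrict simplex3) :=
        i2.const_mul hB
      rw [MeasureTheory.integral_const_mul, integral_sub I12 I34,
        integral_add i1 I2', MeasureTheory.integral_const_mul, MeasureTheory.integral_const_mul,
        integral_add i3 i4,
        setIntegral_mono_eq hβ2 hβ1 hβ hβ, setIntegral_mono_eq hβ1 hβ hβ hβ,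
        setIntegral_mono_eq hβ2 hβ hβ hβ, setIntegral_mono_eq hβ1 hβ1 hβ hβ]
      rw [show β + 2 + (β + 1) + β + β = 4*β + 3 from by ring,
        show β + 1 + β + β + β = 4*β + 1 from by ring,
        show β + 2 + β + β + β = 4*β + 2 from by ring,
        show β + 1 + (β + 1) + β + β = 4*β + 2 from by ring]
      rw [G1, G2, D1, D2, D3, hhB, hkB, hC]
      field_simp
      ring
    · -- r = 1
      show ∫ x in simplex3, rhoBeta β x * lam 1 x * dirichlet3 β x = 0
      have heq : Set.EqOn (fun x => rhoBeta β x * lam 1 x * dirichlet3 β x)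
          (fun x => C * (mono (β+1) (β+2) β β x + hB * mono β (β+1) β β x
            - kB * (mono (β+1) (β+1) β β x + mono β (β+2) β β x))) simplex3 := by
        intro x hx
        obtain ⟨h0', h1', h2', h3'⟩ := hx
        simp only [rhoBeta, dirichlet3_eq (⟨h0', h1', h2', h3'⟩ : x ∈ simplex3), mono,
          lam0_eq, lam1_eq]
        rw [rpow_shift1 h0' hβ, rpow_shift1 h1' hβ, rpow_shift2 h1' hβ]
        ring
      rw [setIntegral_congr_fun measurableSet_simplex3 heq]
      have i1 := integrableOn_mono hβ1 hβ2 hβ hβ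
      have i2 := integrableOn_mono hβ hβ1 hβ hβ
      have i3 := integrableOn_mono hβ1 hβ1 hβ hβ
      have i4 := integrableOn_mono hβ hβ2 hβ hβ
      have I12 : Integrable (fun x => mono (β+1) (β+2) β β x + hB * mono β (β+1) β β x)
          (volume.restrict simplex3) := i1.add (i2.const_mul hB)
      have I34 : Integrable (fun x => kB * (mono (β+1) (β+1) β β x + mono β (β+2) β β x))
          (volume.restrict simplex3) := (i3.add i4).const_mul kB
      have I2' : Integrable (fun x => hB * mono β (β+1) β β x) (volume.restrict simplex3) :=
        i2.const_mul hB
      rw [MeasureTheory.integral_const_mul, integral_sub I12 I34,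
        integral_add i1 I2', MeasureTheory.integral_const_mul, MeasureTheory.integral_const_mul,
        integral_add i3 i4,
        setIntegral_mono_eq hβ1 hβ2 hβ hβ, setIntegral_mono_eq hβ hβ1 hβ hβ,
        setIntegral_mono_eq hβ1 hβ1 hβ hβ, setIntegral_mono_eq hβ hβ2 hβ hβ]
      rw [show β + 1 + (β + 2) + β + β = 4*β + 3 from by ring,
        show β + (β + 1) + β + β = 4*β + 1 from by ring,
        show β + 1 + (β + 1) + β + β = 4*β + 2 from by ring,
        show β + (β + 2) + β + β = 4*β + 2 from by ring]
      rw [G1, G2, D1, D2, D3, hhB, hkB, hC]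
      field_simp
      ring
    · -- r = 2
      show ∫ x in simplex3, rhoBeta β x * lam 2 x * dirichlet3 β x = 0
      have heq : Set.EqOn (fun x => rhoBeta β x * lam 2 x * dirichlet3 β x)
          (fun x => C * (mono (β+1) (β+1) (β+1) β x + hB * mono β β (β+1) β x
            - kB * (mono (β+1) β (β+1) β x + mono β (β+1) (β+1) β x))) simplex3 := by
        intro x hx
        obtain ⟨h0', h1', h2', h3'⟩ := hx
        simp only [rhoBeta, dirichlet3_eq (⟨h0', h1', h2', h3'⟩ : x ∈ simplex3), mono,
          lam0_eq, lam1_eq, lam2_eq]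
        rw [rpow_shift1 h0' hβ, rpow_shift1 h1' hβ, rpow_shift1 h2' hβ]
        ring
      rw [setIntegral_congr_fun measurableSet_simplex3 heq]
      have i1 := integrableOn_mono hβ1 hβ1 hβ1 hβ
      have i2 := integrableOn_mono hβ hβ hβ1 hβ
      have i3 := integrableOn_mono hβ1 hβ hβ1 hβ
      have i4 := integrableOn_mono hβ hβ1 hβ1 hβ
      have I12 : Integrable (fun x => mono (β+1) (β+1) (β+1) β x + hB * mono β β (β+1) β x)
          (volume.restrict simplex3) := i1.add (i2.const_mul hB)
      have I34 : Integrable (fun x => kB * (mono (β+1) β (β+1) β x + mono β (β+1) (β+1) β x))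
          (volume.restrict simplex3) := (i3.add i4).const_mul kB
      have I2' : Integrable (fun x => hB * mono β β (β+1) β x) (volume.restrict simplex3) :=
        i2.const_mul hB
      rw [MeasureTheory.integral_const_mul, integral_sub I12 I34,
        integral_add i1 I2', MeasureTheory.integral_const_mul, MeasureTheory.integral_const_mul,
        integral_add i3 i4,
        setIntegral_mono_eq hβ1 hβ1 hβ1 hβ, setIntegral_mono_eq hβ hβ hβ1 hβ,
        setIntegral_mono_eq hβ1 hβ hβ1 hβ, setIntegral_mono_eq hβ hβ1 hβ1 hβ]
      rw [show β + 1 + (β + 1) + (β + 1) + β = 4*β + 3 from by ring,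
        show β + β + (β + 1) + β = 4*β + 1 from by ring,
        show β + 1 + β + (β + 1) + β = 4*β + 2 from by ring,
        show β + (β + 1) + (β + 1) + β = 4*β + 2 from by ring]
      rw [G1, D1, D2, D3, hhB, hkB, hC]
      field_simp
      ring
    · -- r = 3
      show ∫ x in simplex3, rhoBeta β x * lam 3 x * dirichlet3 β x = 0
      have heq : Set.EqOn (fun x => rhoBeta β x * lam 3 x * dirichlet3 β x)
          (fun x => C * (mono (β+1) (β+1) β (β+1) x + hB * mono β β β (β+1) x
            - kB * (mono (β+1) β β (β+1) x + mono β (β+1) β (β+1) x))) simplex3 := by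
        intro x hx
        obtain ⟨h0', h1', h2', h3'⟩ := hx
        have hd : (0:ℝ) ≤ 1 - x 0 - x 1 - x 2 := by linarith
        simp only [rhoBeta, dirichlet3_eq (⟨h0', h1', h2', h3'⟩ : x ∈ simplex3), mono,
          lam0_eq, lam1_eq, lam3_eq]
        rw [rpow_shift1 h0' hβ, rpow_shift1 h1' hβ, rpow_shift1 hd hβ]
        ring
      rw [setIntegral_congr_fun measurableSet_simplex3 heq]
      have i1 := integrableOn_mono hβ1 hβ1 hβ hβ1
      have i2 := integrableOn_mono hβ hβ hβ hβ1
      have i3 := integrableOn_mono hβ1 hβ hβ hβ1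
      have i4 := integrableOn_mono hβ hβ1 hβ hβ1
      have I12 : Integrable (fun x => mono (β+1) (β+1) β (β+1) x + hB * mono β β β (β+1) x)
          (volume.restrict simplex3) := i1.add (i2.const_mul hB)
      have I34 : Integrable (fun x => kB * (mono (β+1) β β (β+1) x + mono β (β+1) β (β+1) x))
          (volume.restrict simplex3) := (i3.add i4).const_mul kB
      have I2' : Integrable (fun x => hB * mono β β β (β+1) x) (volume.restrict simplex3) :=
        i2.const_mul hB
      rw [MeasureTheory.integral_const_mul, integral_sub I12 I34,
        integral_add i1 I2', MeasureTheory.integral_const_mul, MeasureTheory.integral_const_mul,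
        integral_add i3 i4,
        setIntegral_mono_eq hβ1 hβ1 hβ hβ1, setIntegral_mono_eq hβ hβ hβ hβ1,
        setIntegral_mono_eq hβ1 hβ hβ hβ1, setIntegral_mono_eq hβ hβ1 hβ hβ1]
      rw [show β + 1 + (β + 1) + β + (β + 1) = 4*β + 3 from by ring,
        show β + β + β + (β + 1) = 4*β + 1 from by ring,
        show β + 1 + β + β + (β + 1) = 4*β + 2 from by ring,
        show β + (β + 1) + β + (β + 1) = 4*β + 2 from by ring]
      rw [G1, D1, D2, D3, hhB, hkB, hC]
      field_simp
      ring

end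
end
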